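/- Let X be a real Banach space and T(t) a C₀-semigroup on X. If ∫₀^∞ ‖T(t)x‖² dt < ∞ for every x ∈ X, then the Lyapunov semigroup 𝒯(t)P = T(t)* P T(t) on B(X,X*) is exponentially stable: there exist M, ε > 0 with ‖𝒯(t)‖ ≤ M e^{−εt}. Moreover ‖𝒯(t)‖ = ‖T(t)‖². -/

import Mathlib

open MeasureTheory ENNReal

set_option maxSynthPendingDepth 3

/-- The Lyapunov semigroup `𝒯(t) : P ↦ T(t)* P T(t)` as a bounded linear operator
on `B(X,X*)`: `(𝒯(t)P) x y = P (T(t)x) (T(t)y)`. -/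
noncomputable def lyapunovCLM {X : Type*} [NormedAddCommGroup X] [NormedSpace ℝ X]
    (T : ℝ → X →L[ℝ] X) (t : ℝ) :
    (X →L[ℝ] X →L[ℝ] ℝ) →L[ℝ] (X →L[ℝ] X →L[ℝ] ℝ) :=
  ((ContinuousLinearMap.compL ℝ X (X →L[ℝ] ℝ) (X →L[ℝ] ℝ))
      ((ContinuousLinearMap.compL ℝ X X ℝ).flip (T t))).comp
    ((ContinuousLinearMap.compL ℝ X X (X →L[ℝ] ℝ)).flip (T t))

section Aux

variable {X : Type*} [NormedAddCommGroup X] [NormedSpace ℝ X]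

lemma lyap_apply (T : ℝ → X →L[ℝ] X) (t : ℝ) (P : X →L[ℝ] X →L[ℝ] ℝ) (x y : X) :
    lyapunovCLM T t P x y = P (T t x) (T t y) := rfl

lemma lyap_norm [CompleteSpace X] (T : ℝ → X →L[ℝ] X) (t : ℝ) :
    ‖lyapunovCLM T t‖ = ‖T t‖ ^ 2 := by
  apply le_antisymm
  · apply ContinuousLinearMap.opNorm_le_bound _ (by positivity)
    intro P
    apply ContinuousLinearMap.opNorm_le_bound _ (by positivity)
    intro x
    apply ContinuousLinearMap.opNorm_le_bound _ (by positivity)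
    intro y
    rw [lyap_apply]
    calc ‖P (T t x) (T t y)‖ ≤ ‖P‖ * ‖T t x‖ * ‖T t y‖ := P.le_opNorm₂ _ _
      _ ≤ ‖P‖ * (‖T t‖ * ‖x‖) * (‖T t‖ * ‖y‖) := by
          gcongr
          · exact (T t).le_opNorm x
          · exact (T t).le_opNorm y
      _ = ‖T t‖ ^ 2 * ‖P‖ * ‖x‖ * ‖y‖ := by ring
  · have h : ‖T t‖ ≤ Real.sqrt ‖lyapunovCLM T t‖ := by
      apply ContinuousLinearMap.opNorm_le_bound _ (Real.sqrt_nonneg _)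
      intro x
      by_cases hx : T t x = 0
      · rw [hx, norm_zero]; positivity
      obtain ⟨f, hf1, hfx⟩ := exists_dual_vector ℝ (T t x) (norm_ne_zero_iff.mpr hx)
      set P : X →L[ℝ] X →L[ℝ] ℝ := f.smulRight f with hP
      have hPnorm : ‖P‖ ≤ 1 := by
        rw [hP, ContinuousLinearMap.norm_smulRight_apply, hf1, mul_one]
      have key : ‖T t x‖ ^ 2 = lyapunovCLM T t P x x := by
        rw [lyap_apply]
        simp [hP, ContinuousLinearMap.smulRight_apply, hfx, sq, smul_eq_mul]
      have h1 : ‖T t x‖ ^ 2 ≤ ‖lyapunovCLM T t‖ * ‖x‖ * ‖x‖ := by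
        calc ‖T t x‖ ^ 2 = lyapunovCLM T t P x x := key
          _ ≤ ‖lyapunovCLM T t P x x‖ := le_abs_self _
          _ ≤ ‖lyapunovCLM T t P‖ * ‖x‖ * ‖x‖ := (lyapunovCLM T t P).le_opNorm₂ x x
          _ ≤ (‖lyapunovCLM T t‖ * ‖P‖) * ‖x‖ * ‖x‖ := by
              gcongr; exact (lyapunovCLM T t).le_opNorm P
          _ ≤ ‖lyapunovCLM T t‖ * 1 * ‖x‖ * ‖x‖ := by
              gcongr
          _ = ‖lyapunovCLM T t‖ * ‖x‖ * ‖x‖ := by ring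
      have h2 : ‖T t x‖ ^ 2 ≤ ‖lyapunovCLM T t‖ * ‖x‖ ^ 2 := by
        calc ‖T t x‖ ^ 2 ≤ ‖lyapunovCLM T t‖ * ‖x‖ * ‖x‖ := h1
          _ = ‖lyapunovCLM T t‖ * ‖x‖ ^ 2 := by ring
      calc ‖T t x‖ = Real.sqrt (‖T t x‖ ^ 2) := (Real.sqrt_sq (norm_nonneg _)).symm
        _ ≤ Real.sqrt (‖lyapunovCLM T t‖ * ‖x‖ ^ 2) := Real.sqrt_le_sqrt h2
        _ = Real.sqrt ‖lyapunovCLM T t‖ * ‖x‖ := by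
            rw [Real.sqrt_mul (norm_nonneg _), Real.sqrt_sq (norm_nonneg _)]
    calc ‖T t‖ ^ 2 ≤ Real.sqrt ‖lyapunovCLM T t‖ ^ 2 := by
          gcongr
      _ = ‖lyapunovCLM T t‖ := Real.sq_sqrt (norm_nonneg _)

variable [CompleteSpace X]

private lemma aux_local_bound (T : ℝ → X →L[ℝ] X)
    (hTcont : ∀ x : X, ContinuousOn (fun t => T t x) (Set.Ici (0 : ℝ))) :
    ∃ C : ℝ, 1 ≤ C ∧ ∀ t ∈ Set.Icc (0:ℝ) 1, ‖T t‖ ≤ C := by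
  have h : ∀ x : X, ∃ c : ℝ, ∀ i : Set.Icc (0:ℝ) 1, ‖T i x‖ ≤ c := by
    intro x
    obtain ⟨c, hc⟩ := (isCompact_Icc (a := (0:ℝ)) (b := 1)).exists_bound_of_continuousOn
      ((hTcont x).mono (fun t ht => ht.1))
    exact ⟨c, fun i => hc i i.2⟩
  obtain ⟨C', hC'⟩ := banach_steinhaus (g := fun i : Set.Icc (0:ℝ) 1 => T i)
    (fun x => h x)
  exact ⟨max C' 1, le_max_right _ _, fun t ht => le_trans (hC' ⟨t, ht⟩) (le_max_left _ _)⟩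

private lemma aux_unif_bound (T : ℝ → X →L[ℝ] X)
    (hTadd : ∀ s t : ℝ, 0 ≤ s → 0 ≤ t → T (s + t) = (T s).comp (T t))
    (hL2 : ∀ x : X, IntegrableOn (fun t => ‖T t x‖ ^ 2) (Set.Ioi (0 : ℝ)))
    (C : ℝ) (hC1 : 1 ≤ C) (hC : ∀ t ∈ Set.Icc (0:ℝ) 1, ‖T t‖ ≤ C) :
    ∃ M₁ : ℝ, 1 ≤ M₁ ∧ ∀ t : ℝ, 0 ≤ t → ‖T t‖ ≤ M₁ := by
  have hC0 : (0:ℝ) < C := lt_of_lt_of_le one_pos hC1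
  have key : ∀ x : X, ∀ t : ℝ, 1 ≤ t →
      ‖T t x‖ ^ 2 ≤ C ^ 2 * ∫ s in Set.Ioi (0:ℝ), ‖T s x‖ ^ 2 := by
    intro x t ht
    have h0t : (0:ℝ) ≤ t - 1 := by linarith
    have hsub : Set.Ioo (t-1) t ⊆ Set.Ioi (0:ℝ) := fun s hs => lt_of_le_of_lt h0t hs.1
    have hint : IntegrableOn (fun s => ‖T s x‖ ^ 2) (Set.Ioo (t-1) t) :=
      (hL2 x).mono_set hsub
    have hptwise : ∀ s ∈ Set.Ioo (t-1) t, ‖T t x‖ ^ 2 ≤ C ^ 2 * ‖T s x‖ ^ 2 := by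
      intro s hs
      have hs0 : (0:ℝ) ≤ s := le_of_lt (hsub hs)
      have hts : t - s ∈ Set.Icc (0:ℝ) 1 := ⟨by linarith [hs.2], by linarith [hs.1]⟩
      have : T t x = T (t - s) (T s x) := by
        have := hTadd (t - s) s hts.1 hs0
        rw [sub_add_cancel] at this
        rw [this]; rfl
      have hb : ‖T t x‖ ≤ C * ‖T s x‖ := by
        rw [this]
        calc ‖T (t-s) (T s x)‖ ≤ ‖T (t-s)‖ * ‖T s x‖ := (T (t-s)).le_opNorm _
          _ ≤ C * ‖T s x‖ := by gcongr; exact hC _ hts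
      calc ‖T t x‖ ^ 2 ≤ (C * ‖T s x‖) ^ 2 := by
            apply pow_le_pow_left₀ (norm_nonneg _) hb
        _ = C ^ 2 * ‖T s x‖ ^ 2 := by ring
    have heq : ∫ s in Set.Ioo (t-1) t, ‖T t x‖ ^ 2 = ‖T t x‖ ^ 2 := by
      rw [setIntegral_const]
      simp [Real.volume_Ioo]
    calc ‖T t x‖ ^ 2 = ∫ s in Set.Ioo (t-1) t, ‖T t x‖ ^ 2 := heq.symm
      _ ≤ ∫ s in Set.Ioo (t-1) t, C ^ 2 * ‖T s x‖ ^ 2 :=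
          setIntegral_mono_on (integrableOn_const (by simp [Real.volume_Ioo]))
            (hint.const_mul _) measurableSet_Ioo hptwise
      _ = C ^ 2 * ∫ s in Set.Ioo (t-1) t, ‖T s x‖ ^ 2 := integral_const_mul _ _
      _ ≤ C ^ 2 * ∫ s in Set.Ioi (0:ℝ), ‖T s x‖ ^ 2 := by
          refine mul_le_mul_of_nonneg_left ?_ (by positivity)
          exact setIntegral_mono_set (hL2 x)
            (Filter.Eventually.of_forall (fun s => by positivity))
            (HasSubset.Subset.eventuallyLE hsub)
  have hbdd : ∀ x : X, ∃ c : ℝ, ∀ i : {t : ℝ // 0 ≤ t}, ‖T i x‖ ≤ c := by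
    intro x
    set I := ∫ s in Set.Ioi (0:ℝ), ‖T s x‖ ^ 2 with hI
    have hInn : 0 ≤ I := integral_nonneg (fun s => by positivity)
    refine ⟨max (C * ‖x‖) (C * Real.sqrt I), fun i => ?_⟩
    rcases le_or_gt (i:ℝ) 1 with h1 | h1
    · refine le_trans ?_ (le_max_left _ _)
      calc ‖T i x‖ ≤ ‖T i‖ * ‖x‖ := (T i).le_opNorm _
        _ ≤ C * ‖x‖ := by gcongr; exact hC _ ⟨i.2, h1⟩
    · refine le_trans ?_ (le_max_right _ _)
      have := key x i h1.le
      calc ‖T i x‖ = Real.sqrt (‖T i x‖ ^ 2) := (Real.sqrt_sq (norm_nonneg _)).symm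
        _ ≤ Real.sqrt (C ^ 2 * I) := Real.sqrt_le_sqrt this
        _ = C * Real.sqrt I := by
            rw [Real.sqrt_mul (by positivity), Real.sqrt_sq hC0.le]
  obtain ⟨M, hM⟩ := banach_steinhaus (g := fun i : {t : ℝ // 0 ≤ t} => T i) hbdd
  exact ⟨max M 1, le_max_right _ _, fun t ht => le_trans (hM ⟨t, ht⟩) (le_max_left _ _)⟩

private lemma aux_L2_bound (T : ℝ → X →L[ℝ] X)
    (hL2 : ∀ x : X, IntegrableOn (fun t => ‖T t x‖ ^ 2) (Set.Ioi (0 : ℝ))) :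
    ∃ K : ℝ, 0 < K ∧ ∀ x : X, (∫ s in Set.Ioi (0:ℝ), ‖T s x‖ ^ 2) ≤ K * ‖x‖ ^ 2 := by
  classical
  set μ := volume.restrict (Set.Ioi (0:ℝ)) with hμ
  set F : X → ℝ≥0∞ := fun x => ∫⁻ s, ENNReal.ofReal (‖T s x‖ ^ 2) ∂μ with hF
  have hmeas : ∀ x : X, AEMeasurable (fun s => ENNReal.ofReal (‖T s x‖ ^ 2)) μ :=
    fun x => ((hL2 x).aestronglyMeasurable.aemeasurable).ennreal_ofReal
  have hFfin : ∀ x : X, F x < ⊤ := by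
    intro x
    have h2 := (hL2 x).hasFiniteIntegral
    rw [hasFiniteIntegral_iff_norm] at h2
    refine lt_of_le_of_lt (le_of_eq ?_) h2
    apply lintegral_congr
    intro s
    rw [Real.norm_eq_abs, abs_of_nonneg (by positivity)]
  -- scaling
  have hFsmul : ∀ (c : ℝ) (x : X), F (c • x) = ENNReal.ofReal (c ^ 2) * F x := by
    intro c x
    rw [hF]
    simp only
    rw [← lintegral_const_mul' _ _ (by simp)]
    apply lintegral_congr
    intro s
    rw [← ENNReal.ofReal_mul (by positivity)]
    congr 1
    rw [(T s).map_smul, norm_smul]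
    simp [mul_pow, Real.norm_eq_abs, sq_abs]
  -- closed sets
  set E : ℕ → Set X := fun k => {x | F x ≤ k} with hE
  have hclosed : ∀ k, IsClosed (E k) := by
    intro k
    apply IsSeqClosed.isClosed
    intro u x hu hux
    have hptw : ∀ s : ℝ, Filter.Tendsto (fun m => ENNReal.ofReal (‖T s (u m)‖ ^ 2))
        Filter.atTop (nhds (ENNReal.ofReal (‖T s x‖ ^ 2))) := by
      intro s
      apply ENNReal.tendsto_ofReal
      have : Filter.Tendsto (fun m => T s (u m)) Filter.atTop (nhds (T s x)) :=
        ((T s).continuous.tendsto x).comp hux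
      exact (this.norm.pow 2)
    have hFx : F x ≤ Filter.liminf (fun m => F (u m)) Filter.atTop := by
      have := lintegral_liminf_le' (μ := μ) (u := Filter.atTop) (f := fun m s => ENNReal.ofReal (‖T s (u m)‖ ^ 2))
        (fun m => hmeas (u m))
      refine le_trans (le_of_eq ?_) this
      apply lintegral_congr
      intro s
      exact ((hptw s).liminf_eq).symm
    refine le_trans hFx ?_
    apply Filter.liminf_le_of_frequently_le'
    exact Filter.Frequently.of_forall (fun m => hu m)
  -- union covers
  have hcover : (⋃ k, E k) = Set.univ := by
    ext x
    simp only [Set.mem_iUnion, Set.mem_univ, iff_true, hE, Set.mem_setOf_eq]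
    refine ⟨Nat.ceil (F x).toReal, ?_⟩
    calc F x = ENNReal.ofReal (F x).toReal := (ENNReal.ofReal_toReal (hFfin x).ne).symm
      _ ≤ ENNReal.ofReal (Nat.ceil (F x).toReal : ℝ) :=
          ENNReal.ofReal_le_ofReal (Nat.le_ceil _)
      _ = (Nat.ceil (F x).toReal : ℝ≥0∞) := ENNReal.ofReal_natCast _
  -- Baire
  obtain ⟨k, hk⟩ := nonempty_interior_of_iUnion_of_closed hclosed hcover
  obtain ⟨x₀, hx₀⟩ := hk
  obtain ⟨r, hr, hball⟩ := Metric.isOpen_iff.mp isOpen_interior x₀ hx₀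
  have hballE : Metric.ball x₀ r ⊆ E k := le_trans hball interior_subset
  -- bound on small ball
  have hsmall : ∀ y : X, ‖y‖ < r → F y ≤ 4 * k := by
    intro y hy
    have hz : x₀ + y ∈ E k := hballE (by
      simp [Metric.mem_ball, dist_eq_norm, hy])
    have hx0 : x₀ ∈ E k := hballE (Metric.mem_ball_self hr)
    have hptw : ∀ s : ℝ, ENNReal.ofReal (‖T s y‖ ^ 2) ≤
        2 * ENNReal.ofReal (‖T s (x₀ + y)‖ ^ 2) + 2 * ENNReal.ofReal (‖T s x₀‖ ^ 2) := by
      intro s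
      have h1 : ‖T s y‖ ^ 2 ≤ 2 * ‖T s (x₀ + y)‖ ^ 2 + 2 * ‖T s x₀‖ ^ 2 := by
        have : ‖T s y‖ ≤ ‖T s (x₀ + y)‖ + ‖T s x₀‖ := by
          have : T s y = T s (x₀ + y) - T s x₀ := by rw [map_add]; abel
          rw [this]; exact norm_sub_le _ _
        nlinarith [norm_nonneg (T s y), norm_nonneg (T s (x₀ + y)), norm_nonneg (T s x₀),
          sq_nonneg (‖T s (x₀ + y)‖ - ‖T s x₀‖)]
      calc ENNReal.ofReal (‖T s y‖ ^ 2)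
          ≤ ENNReal.ofReal (2 * ‖T s (x₀ + y)‖ ^ 2 + 2 * ‖T s x₀‖ ^ 2) :=
            ENNReal.ofReal_le_ofReal h1
        _ = ENNReal.ofReal (2 * ‖T s (x₀ + y)‖ ^ 2) + ENNReal.ofReal (2 * ‖T s x₀‖ ^ 2) :=
            ENNReal.ofReal_add (by positivity) (by positivity)
        _ = 2 * ENNReal.ofReal (‖T s (x₀ + y)‖ ^ 2) + 2 * ENNReal.ofReal (‖T s x₀‖ ^ 2) := by
            rw [ENNReal.ofReal_mul (by norm_num), ENNReal.ofReal_mul (by norm_num)]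
            norm_num
    calc F y ≤ ∫⁻ s, (2 * ENNReal.ofReal (‖T s (x₀ + y)‖ ^ 2)
          + 2 * ENNReal.ofReal (‖T s x₀‖ ^ 2)) ∂μ := lintegral_mono hptw
      _ = 2 * F (x₀ + y) + 2 * F x₀ := by
          rw [lintegral_add_left' ((hmeas _).const_mul 2), lintegral_const_mul' _ _ (by simp),
            lintegral_const_mul' _ _ (by simp)]
      _ ≤ 2 * k + 2 * k := by gcongr <;> [exact hz; exact hx0]
      _ = 4 * k := by ring
  -- general bound
  set K : ℝ := 16 * (k + 1) / r ^ 2 with hKdef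
  have hK0 : 0 < K := by positivity
  refine ⟨K, hK0, fun x => ?_⟩
  have hFbound : F x ≤ ENNReal.ofReal (K * ‖x‖ ^ 2) := by
    by_cases hx : x = 0
    · subst hx
      have : F 0 = 0 := by
        rw [hF]; simp
      rw [this]; exact zero_le
    · have hxn : (0:ℝ) < ‖x‖ := norm_pos_iff.mpr hx
      set c : ℝ := r / (2 * ‖x‖) with hc
      have hc0 : 0 < c := by positivity
      have hcy : ‖c • x‖ < r := by
        rw [norm_smul, Real.norm_eq_abs, abs_of_pos hc0, hc]
        rw [div_mul_eq_mul_div, mul_comm]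
        rw [div_lt_iff₀ (by positivity)]
        nlinarith
      have h4k := hsmall (c • x) hcy
      rw [hFsmul] at h4k
      have hc2 : (0:ℝ) < c ^ 2 := by positivity
      -- F x ≤ (c²)⁻¹ * 4k
      have hone : ENNReal.ofReal ((c ^ 2)⁻¹) * ENNReal.ofReal (c ^ 2) = 1 := by
        rw [← ENNReal.ofReal_mul (by positivity), inv_mul_cancel₀ hc2.ne']
        simp
      have : F x ≤ ENNReal.ofReal ((c ^ 2)⁻¹) * (4 * k) := by
        calc F x = ENNReal.ofReal ((c ^ 2)⁻¹) * (ENNReal.ofReal (c ^ 2) * F x) := by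
              rw [← mul_assoc, hone, one_mul]
          _ ≤ _ := mul_le_mul_right h4k _
      refine le_trans this ?_
      have hcinv : (c ^ 2)⁻¹ = 4 * ‖x‖ ^ 2 / r ^ 2 := by
        rw [hc]; field_simp; ring
      have hcalc : (c ^ 2)⁻¹ * (4 * k) ≤ K * ‖x‖ ^ 2 := by
        rw [hcinv, hKdef, div_mul_eq_mul_div, div_mul_eq_mul_div]
        apply (div_le_div_iff_of_pos_right (by positivity)).mpr
        have : (0:ℝ) ≤ (k:ℝ) := Nat.cast_nonneg k
        nlinarith [sq_nonneg ‖x‖]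
      calc ENNReal.ofReal ((c ^ 2)⁻¹) * (4 * k)
          = ENNReal.ofReal ((c ^ 2)⁻¹) * ENNReal.ofReal (4 * k) := by
            rw [ENNReal.ofReal_mul (by norm_num)]; norm_num
        _ = ENNReal.ofReal ((c ^ 2)⁻¹ * (4 * k)) := (ENNReal.ofReal_mul (by positivity)).symm
        _ ≤ ENNReal.ofReal (K * ‖x‖ ^ 2) := ENNReal.ofReal_le_ofReal hcalc
  -- back to real integral
  have hreal : (∫ s in Set.Ioi (0:ℝ), ‖T s x‖ ^ 2) = (F x).toReal := by
    rw [hF, ← hμ]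
    rw [integral_eq_lintegral_of_nonneg_ae
      (Filter.Eventually.of_forall (fun s => by positivity)) (hL2 x).aestronglyMeasurable]
  rw [hreal]
  calc (F x).toReal ≤ (ENNReal.ofReal (K * ‖x‖ ^ 2)).toReal :=
        ENNReal.toReal_mono ENNReal.ofReal_ne_top hFbound
    _ = K * ‖x‖ ^ 2 := ENNReal.toReal_ofReal (by positivity)

private lemma aux_decay (T : ℝ → X →L[ℝ] X)
    (hT0 : T 0 = ContinuousLinearMap.id ℝ X)
    (hTadd : ∀ s t : ℝ, 0 ≤ s → 0 ≤ t → T (s + t) = (T s).comp (T t))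
    (hL2 : ∀ x : X, IntegrableOn (fun t => ‖T t x‖ ^ 2) (Set.Ioi (0 : ℝ)))
    (M₁ : ℝ) (hM₁1 : 1 ≤ M₁) (hM₁ : ∀ t : ℝ, 0 ≤ t → ‖T t‖ ≤ M₁)
    (K : ℝ) (hK0 : 0 < K) (hK : ∀ x : X, (∫ s in Set.Ioi (0:ℝ), ‖T s x‖ ^ 2) ≤ K * ‖x‖ ^ 2) :
    ∃ M ε : ℝ, 0 < M ∧ 0 < ε ∧ ∀ t : ℝ, 0 ≤ t → ‖T t‖ ≤ M * Real.exp (-ε * t) := by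
  have hM₁0 : (0:ℝ) < M₁ := lt_of_lt_of_le one_pos hM₁1
  -- step F : for t > 0, t * ‖T t x‖^2 ≤ M₁^2 * K * ‖x‖^2
  have hF : ∀ (x : X) (t : ℝ), 0 < t → t * ‖T t x‖ ^ 2 ≤ M₁ ^ 2 * K * ‖x‖ ^ 2 := by
    intro x t ht
    have hsub : Set.Ioo (0:ℝ) t ⊆ Set.Ioi (0:ℝ) := fun s hs => hs.1
    have hint : IntegrableOn (fun s => ‖T s x‖ ^ 2) (Set.Ioo 0 t) := (hL2 x).mono_set hsub
    have hptwise : ∀ s ∈ Set.Ioo (0:ℝ) t, ‖T t x‖ ^ 2 ≤ M₁ ^ 2 * ‖T s x‖ ^ 2 := by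
      intro s hs
      have h1 : T t x = T (t - s) (T s x) := by
        have := hTadd (t - s) s (by linarith [hs.2]) hs.1.le
        rw [sub_add_cancel] at this
        rw [this]; rfl
      have hb : ‖T t x‖ ≤ M₁ * ‖T s x‖ := by
        rw [h1]
        calc ‖T (t-s) (T s x)‖ ≤ ‖T (t-s)‖ * ‖T s x‖ := (T (t-s)).le_opNorm _
          _ ≤ M₁ * ‖T s x‖ := by gcongr; exact hM₁ _ (by linarith [hs.2])
      calc ‖T t x‖ ^ 2 ≤ (M₁ * ‖T s x‖) ^ 2 := pow_le_pow_left₀ (norm_nonneg _) hb 2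
        _ = M₁ ^ 2 * ‖T s x‖ ^ 2 := by ring
    calc t * ‖T t x‖ ^ 2 = ∫ s in Set.Ioo (0:ℝ) t, ‖T t x‖ ^ 2 := by
          rw [setIntegral_const]
          simp [Real.volume_Ioo, ENNReal.toReal_ofReal ht.le, smul_eq_mul, ht.le]
      _ ≤ ∫ s in Set.Ioo (0:ℝ) t, M₁ ^ 2 * ‖T s x‖ ^ 2 :=
          setIntegral_mono_on (integrableOn_const (by simp [Real.volume_Ioo]))
            (hint.const_mul _) measurableSet_Ioo hptwise
      _ = M₁ ^ 2 * ∫ s in Set.Ioo (0:ℝ) t, ‖T s x‖ ^ 2 := integral_const_mul _ _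
      _ ≤ M₁ ^ 2 * ∫ s in Set.Ioi (0:ℝ), ‖T s x‖ ^ 2 := by
          refine mul_le_mul_of_nonneg_left ?_ (by positivity)
          exact setIntegral_mono_set (hL2 x)
            (Filter.Eventually.of_forall (fun s => by positivity))
            (HasSubset.Subset.eventuallyLE hsub)
      _ ≤ M₁ ^ 2 * (K * ‖x‖ ^ 2) := by gcongr; exact hK x
      _ = M₁ ^ 2 * K * ‖x‖ ^ 2 := by ring
  -- choose t₀
  set t₀ : ℝ := 4 * (M₁ ^ 2 * K) + 1 with ht₀def
  have ht₀0 : 0 < t₀ := by positivity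
  have hhalf : ‖T t₀‖ ≤ 1 / 2 := by
    apply ContinuousLinearMap.opNorm_le_bound _ (by norm_num)
    intro x
    have h1 := hF x t₀ ht₀0
    have h2 : ‖T t₀ x‖ ^ 2 ≤ (1/2 * ‖x‖) ^ 2 := by
      have h3 : t₀ * ‖T t₀ x‖ ^ 2 ≤ M₁ ^ 2 * K * ‖x‖ ^ 2 := h1
      have h4 : ‖T t₀ x‖ ^ 2 ≤ M₁ ^ 2 * K * ‖x‖ ^ 2 / t₀ := by
        rw [le_div_iff₀ ht₀0]; linarith [h3]
      refine le_trans h4 ?_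
      rw [ht₀def]
      rw [div_le_iff₀ (by positivity)]
      nlinarith [sq_nonneg ‖x‖, mul_nonneg (mul_nonneg (sq_nonneg M₁) hK0.le) (sq_nonneg ‖x‖)]
    calc ‖T t₀ x‖ = Real.sqrt (‖T t₀ x‖ ^ 2) := (Real.sqrt_sq (norm_nonneg _)).symm
      _ ≤ Real.sqrt ((1/2 * ‖x‖) ^ 2) := Real.sqrt_le_sqrt h2
      _ = 1/2 * ‖x‖ := Real.sqrt_sq (by positivity)
  -- iterate
  have hiter : ∀ n : ℕ, ∀ t : ℝ, 0 ≤ t → ‖T (t + n * t₀)‖ ≤ M₁ * (1/2) ^ n := by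
    intro n
    induction n with
    | zero => intro t ht; simpa using hM₁ t ht
    | succ n ih =>
      intro t ht
      have heq : t + (n + 1 : ℕ) * t₀ = (t + n * t₀) + t₀ := by push_cast; ring
      rw [heq, hTadd _ _ (by positivity) ht₀0.le]
      calc ‖(T (t + n * t₀)).comp (T t₀)‖ ≤ ‖T (t + n * t₀)‖ * ‖T t₀‖ :=
            ContinuousLinearMap.opNorm_comp_le _ _
        _ ≤ (M₁ * (1/2) ^ n) * (1/2) :=
            mul_le_mul (ih t ht) hhalf (norm_nonneg _) (by positivity)
        _ = M₁ * (1/2) ^ (n + 1) := by ring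
  -- exponential bound
  set ε : ℝ := Real.log 2 / t₀ with hεdef
  have hε0 : 0 < ε := div_pos (Real.log_pos one_lt_two) ht₀0
  refine ⟨2 * M₁, ε, by positivity, hε0, ?_⟩
  intro t ht
  set n : ℕ := ⌊t / t₀⌋₊ with hn
  have hnle : (n : ℝ) * t₀ ≤ t := by
    rw [hn]
    calc (⌊t / t₀⌋₊ : ℝ) * t₀ ≤ t / t₀ * t₀ := by
          gcongr
          exact Nat.floor_le (by positivity)
      _ = t := div_mul_cancel₀ t ht₀0.ne'
  have hlt : t / t₀ < n + 1 := Nat.lt_floor_add_one _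
  have h1 : ‖T t‖ ≤ M₁ * (1/2) ^ n := by
    have := hiter n (t - n * t₀) (by linarith)
    rw [sub_add_cancel] at this
    exact this
  have h2 : ((1:ℝ)/2) ^ n ≤ 2 * Real.exp (-ε * t) := by
    have hpow : ((1:ℝ)/2) ^ n = Real.exp (-(n * Real.log 2)) := by
      rw [Real.exp_neg, Real.exp_nat_mul, Real.exp_log two_pos]
      rw [one_div, inv_pow]
    rw [hpow]
    have hle : -(↑n * Real.log 2) ≤ Real.log 2 + (-ε * t) := by
      rw [hεdef]
      have hl2 : (0:ℝ) < Real.log 2 := Real.log_pos one_lt_two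
      have : t / t₀ - 1 ≤ (n:ℝ) := by linarith
      have h3 : (t / t₀ - 1) * Real.log 2 ≤ (n:ℝ) * Real.log 2 := by gcongr
      have h4 : Real.log 2 / t₀ * t = t / t₀ * Real.log 2 := by ring
      nlinarith
    calc Real.exp (-(↑n * Real.log 2)) ≤ Real.exp (Real.log 2 + (-ε * t)) :=
          Real.exp_le_exp.mpr hle
      _ = 2 * Real.exp (-ε * t) := by rw [Real.exp_add, Real.exp_log two_pos]
  calc ‖T t‖ ≤ M₁ * (1/2) ^ n := h1
    _ ≤ M₁ * (2 * Real.exp (-ε * t)) := by gcongr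
    _ = 2 * M₁ * Real.exp (-ε * t) := by ring

end Aux

/-- If `∫₀^∞ ‖T(t)x‖² dt < ∞` for every `x`, then the Lyapunov semigroup
`𝒯(t)P = T(t)* P T(t)` on `B(X,X*)` is exponentially stable: `‖𝒯(t)‖ ≤ M e^{−εt}`.
Moreover `‖𝒯(t)‖ = ‖T(t)‖²`. -/
theorem lyapunovSemigroup_exponentially_stable_of_L2
    {X : Type*} [NormedAddCommGroup X] [NormedSpace ℝ X] [CompleteSpace X]
    (T : ℝ → X →L[ℝ] X)
    (hT0 : T 0 = ContinuousLinearMap.id ℝ X)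
    (hTadd : ∀ s t : ℝ, 0 ≤ s → 0 ≤ t → T (s + t) = (T s).comp (T t))
    (hTcont : ∀ x : X, ContinuousOn (fun t => T t x) (Set.Ici (0 : ℝ)))
    (hL2 : ∀ x : X, IntegrableOn (fun t => ‖T t x‖ ^ 2) (Set.Ioi (0 : ℝ))) :
    (∃ M ε : ℝ, 0 < M ∧ 0 < ε ∧
      ∀ t : ℝ, 0 ≤ t → ‖lyapunovCLM T t‖ ≤ M * Real.exp (-ε * t)) ∧
    (∀ t : ℝ, 0 ≤ t → ‖lyapunovCLM T t‖ = ‖T t‖ ^ 2) := by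
  obtain ⟨C, hC1, hC⟩ := aux_local_bound T hTcont
  obtain ⟨M₁, hM₁1, hM₁⟩ := aux_unif_bound T hTadd hL2 C hC1 hC
  obtain ⟨K, hK0, hK⟩ := aux_L2_bound T hL2
  obtain ⟨M, ε, hM0, hε0, hdecay⟩ := aux_decay T hT0 hTadd hL2 M₁ hM₁1 hM₁ K hK0 hK
  refine ⟨⟨M ^ 2, 2 * ε, by positivity, by positivity, fun t ht => ?_⟩,
    fun t ht => lyap_norm T t⟩
  rw [lyap_norm]
  calc ‖T t‖ ^ 2 ≤ (M * Real.exp (-ε * t)) ^ 2 :=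
        pow_le_pow_left₀ (norm_nonneg _) (hdecay t ht) 2
    _ = M ^ 2 * Real.exp (-(2 * ε) * t) := by
        rw [mul_pow, sq (Real.exp _), ← Real.exp_add]
        ring_nf
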